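/- For every b ≥ 1, ∫_b^∞ √(u+b)/(u²+b) du > π − 2·arctan(√b). -/

import Mathlib

open Real MeasureTheory Set Filter Topology

theorem stmt_10 (b : ℝ) (hb : 1 ≤ b) :
    Real.pi - 2 * Real.arctan (Real.sqrt b) <
      ∫ u in Ioi b, Real.sqrt (u + b) / (u ^ 2 + b) := by
  have hb0 : (0:ℝ) < b := lt_of_lt_of_le one_pos hb
  set F : ℝ → ℝ := fun u => Real.sqrt (u + b) / (u ^ 2 + b) with hF
  set G : ℝ → ℝ := fun u => 1 / (Real.sqrt u * (1 + u)) with hG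
  -- derivative of 2 * arctan √u is G
  have hderiv : ∀ u ∈ Ici b, HasDerivAt (fun x => 2 * Real.arctan (Real.sqrt x)) (G u) u := by
    intro u hu
    have hu0 : (0:ℝ) < u := lt_of_lt_of_le hb0 hu
    have hs : HasDerivAt Real.sqrt (1 / (2 * Real.sqrt u)) u :=
      Real.hasDerivAt_sqrt (ne_of_gt hu0)
    have ha : HasDerivAt Real.arctan (1 / (1 + Real.sqrt u ^ 2)) (Real.sqrt u) :=
      Real.hasDerivAt_arctan _
    have := (ha.comp u hs).const_mul (2:ℝ)
    refine this.congr_deriv (Eq.symm ?_)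
    have hsq : Real.sqrt u ^ 2 = u := Real.sq_sqrt hu0.le
    have hsu : (0:ℝ) < Real.sqrt u := Real.sqrt_pos.2 hu0
    rw [hG]
    field_simp
    nlinarith [hsq, hsu]
  have hGnonneg : ∀ u ∈ Ioi b, 0 ≤ G u := by
    intro u hu
    have hu0 : (0:ℝ) < u := lt_trans hb0 hu
    have : 0 < Real.sqrt u * (1 + u) :=
      mul_pos (Real.sqrt_pos.2 hu0) (by linarith)
    positivity
  have hsqrt_top : Tendsto Real.sqrt atTop atTop := by
    rw [tendsto_atTop]
    intro c
    filter_upwards [eventually_ge_atTop (max 0 (c ^ 2))] with x hx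
    have h1 : c ^ 2 ≤ x := le_trans (le_max_right _ _) hx
    have h2 : (0:ℝ) ≤ x := le_trans (le_max_left _ _) hx
    calc c ≤ |c| := le_abs_self c
      _ = Real.sqrt (c ^ 2) := (Real.sqrt_sq_eq_abs c).symm
      _ ≤ Real.sqrt x := Real.sqrt_le_sqrt h1
  have htend : Tendsto (fun x => 2 * Real.arctan (Real.sqrt x)) atTop (𝓝 Real.pi) := by
    have h1 : Tendsto (fun x => Real.arctan (Real.sqrt x)) atTop (𝓝 (Real.pi / 2)) :=
      (Real.tendsto_arctan_atTop.mono_right nhdsWithin_le_nhds).comp hsqrt_top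
    have := h1.const_mul (2:ℝ)
    simpa [mul_div_cancel₀] using this
  have hGint : IntegrableOn G (Ioi b) := by
    exact integrableOn_Ioi_deriv_of_nonneg' hderiv hGnonneg htend
  have hGval : ∫ u in Ioi b, G u = Real.pi - 2 * Real.arctan (Real.sqrt b) :=
    integral_Ioi_of_hasDerivAt_of_tendsto' hderiv hGint htend
  -- F is continuous on Ioi b
  have hFcont : ContinuousOn F (Ioi b) := by
    apply ContinuousOn.div
    · exact (Real.continuous_sqrt.comp (continuous_id.add continuous_const)).continuousOn
    · exact (continuous_pow 2).continuousOn.add continuousOn_const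
    · intro u _
      positivity
  -- the bound F ≤ 3 G gives integrability of F
  have hFG : ∀ u ∈ Ioi b, F u ≤ 3 * G u := by
    intro u hu
    rw [mem_Ioi] at hu
    have hu1 : (1:ℝ) ≤ u := le_trans hb hu.le
    have hu0 : (0:ℝ) < u := lt_trans hb0 hu
    set s := Real.sqrt (u + b) with hsdef
    set t := Real.sqrt u with htdef
    have hs2 : s ^ 2 = u + b := Real.sq_sqrt (by linarith)
    have ht2 : t ^ 2 = u := Real.sq_sqrt hu0.le
    have hs0 : 0 ≤ s := Real.sqrt_nonneg _
    have ht0 : 0 < t := Real.sqrt_pos.2 hu0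
    have hd1 : (0:ℝ) < u ^ 2 + b := by positivity
    have hd2 : (0:ℝ) < t * (1 + u) := mul_pos ht0 (by linarith)
    have h3 : 3 * G u = 3 / (t * (1 + u)) := by rw [hG]; ring
    rw [hF, h3, div_le_div_iff₀ hd1 hd2]
    have key : s * (t * (1 + u)) ≤ 3 * (u ^ 2 + b) := by
      nlinarith [sq_nonneg (3 * u - 2 * (s * t)), mul_pos ht0 hd2,
        mul_nonneg (mul_nonneg hs0 ht0.le) (by linarith : (0:ℝ) ≤ u - 1),
        mul_nonneg hs0 ht0.le, sq_nonneg (s - t), sq_nonneg (s * t)]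
    exact key
  have hFnonneg : ∀ u ∈ Ioi b, 0 ≤ F u := by
    intro u hu
    rw [mem_Ioi] at hu
    have : (0:ℝ) < u ^ 2 + b := by positivity
    exact div_nonneg (Real.sqrt_nonneg _) this.le
  have hFint : IntegrableOn F (Ioi b) := by
    have h3G : IntegrableOn (fun u => 3 * G u) (Ioi b) := hGint.const_mul 3
    apply MeasureTheory.Integrable.mono h3G (hFcont.aestronglyMeasurable measurableSet_Ioi)
    rw [ae_restrict_iff' measurableSet_Ioi]
    filter_upwards with u hu
    rw [Real.norm_eq_abs, Real.norm_eq_abs, abs_of_nonneg (hFnonneg u hu),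
      abs_of_nonneg (by linarith [hGnonneg u hu] : (0:ℝ) ≤ 3 * G u)]
    exact hFG u hu
  -- strict pointwise inequality G < F on Ioi b
  have hGF : ∀ u ∈ Ioi b, G u < F u := by
    intro u hu
    rw [mem_Ioi] at hu
    have hu1 : (1:ℝ) ≤ u := le_trans hb hu.le
    have hu0 : (0:ℝ) < u := lt_trans hb0 hu
    set s := Real.sqrt (u + b) with hsdef
    set t := Real.sqrt u with htdef
    have hs2 : s ^ 2 = u + b := Real.sq_sqrt (by linarith)
    have ht2 : t ^ 2 = u := Real.sq_sqrt hu0.le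
    have ht0 : 0 < t := Real.sqrt_pos.2 hu0
    have hst : t ≤ s := Real.sqrt_le_sqrt (by linarith)
    have hd1 : (0:ℝ) < u ^ 2 + b := by positivity
    have hd2 : (0:ℝ) < t * (1 + u) := mul_pos ht0 (by linarith)
    rw [hF, hG]
    rw [div_lt_div_iff₀ hd2 hd1]
    have h1 : t * t ≤ s * t := mul_le_mul_of_nonneg_right hst ht0.le
    nlinarith [mul_le_mul_of_nonneg_right h1 (by linarith : (0:ℝ) ≤ 1 + u)]
  -- conclude via positivity of the integral of F - G
  have hpos : 0 < ∫ u in Ioi b, (F u - G u) := by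
    rw [setIntegral_pos_iff_support_of_nonneg_ae]
    · refine lt_of_lt_of_le ?_ (measure_mono (?_ : Ioi b ⊆ Function.support (fun u => F u - G u) ∩ Ioi b))
      · simp [Real.volume_Ioi]
      · intro u hu
        exact ⟨ne_of_gt (sub_pos.2 (hGF u hu)), hu⟩
    · filter_upwards [ae_restrict_mem measurableSet_Ioi] with u hu
      simp only [Pi.zero_apply]
      linarith [hGF u hu]
    · exact hFint.sub hGint
  have hsub : ∫ u in Ioi b, (F u - G u) = (∫ u in Ioi b, F u) - ∫ u in Ioi b, G u :=
    integral_sub hFint hGint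
  rw [hsub, hGval] at hpos
  linarith
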